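/- Let y₁,…,y_N ∈ ℝ, extended by y_{-i} = -y_i, and suppose sup_{η ≤ t ≤ 1} |m(E + it)| ≤ C_a where m(z) = (1/(2N))∑_{1≤|i|≤N} 1/(y_i - z) and η = N^{-1+a} for some a ∈ (0,1). Then (1/(2N)) ∑_{|y_i - E| ≥ η} 1/|y_i - E| ≤ 2C_a log N + 4. -/

import Mathlib

open intervalIntegral MeasureTheory

lemma aux_int_two_sq (x : ℝ) (hx0 : 0 < |x|) :
    ∫ t in |x|..1, (2*t^2)⁻¹ = (1/2) * (1/|x| - 1) := by
  have h0 : (0:ℝ) ∉ Set.uIcc |x| 1 := Set.notMem_uIcc_of_lt hx0 one_pos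
  have heq : (fun t : ℝ => (2*t^2)⁻¹) = fun t : ℝ => (1/2) * t^(-2:ℤ) := by
    funext t
    rw [zpow_neg, mul_inv, show ((2:ℤ)) = ((2:ℕ):ℤ) from rfl, zpow_natCast]
    norm_num
  rw [heq, intervalIntegral.integral_const_mul, integral_zpow (Or.inr ⟨by norm_num, h0⟩)]
  have : |x| ≠ 0 := ne_of_gt hx0
  rw [show (-2+1 : ℤ) = -1 from rfl]
  rw [zpow_neg_one]
  push_cast
  field_simp
  ring

lemma aux_ptwise (x η : ℝ) (hη0 : 0 < η) (hη1 : η ≤ 1) (hx : η ≤ |x|) :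
    1 / |x| ≤ 2 * (∫ t in η..1, (x^2 + t^2)⁻¹) + 1 := by
  have hx0 : 0 < |x| := lt_of_lt_of_le hη0 hx
  have hxne : x ≠ 0 := abs_pos.mp hx0
  have hc : Continuous fun t : ℝ => (x^2 + t^2)⁻¹ := by
    apply Continuous.inv₀ (by continuity)
    intro t; positivity
  by_cases h1 : 1 ≤ |x|
  · have hint : 0 ≤ ∫ t in η..1, (x^2+t^2)⁻¹ :=
      intervalIntegral.integral_nonneg hη1 (fun t _ => by positivity)
    have h2 : 1/|x| ≤ 1 := by rw [div_le_one hx0]; exact h1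
    linarith
  · push_neg at h1
    have key : ∫ t in |x|..1, (x^2+t^2)⁻¹ ≤ ∫ t in η..1, (x^2+t^2)⁻¹ := by
      have hsplit : (∫ t in η..|x|, (x^2+t^2)⁻¹) + ∫ t in |x|..1, (x^2+t^2)⁻¹
          = ∫ t in η..1, (x^2+t^2)⁻¹ :=
        intervalIntegral.integral_add_adjacent_intervals
          (hc.intervalIntegrable _ _) (hc.intervalIntegrable _ _)
      have h0 : 0 ≤ ∫ t in η..|x|, (x^2+t^2)⁻¹ :=
        intervalIntegral.integral_nonneg hx (fun t _ => by positivity)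
      linarith
    have key2 : (1/2) * (1/|x| - 1) ≤ ∫ t in |x|..1, (x^2+t^2)⁻¹ := by
      have hle : ∫ t in |x|..1, (2*t^2)⁻¹ ≤ ∫ t in |x|..1, (x^2+t^2)⁻¹ := by
        apply intervalIntegral.integral_mono_on h1.le
        · apply ContinuousOn.intervalIntegrable
          apply ContinuousOn.inv₀ (by fun_prop)
          intro t ht
          have h0' : (0:ℝ) ∉ Set.uIcc |x| 1 := Set.notMem_uIcc_of_lt hx0 one_pos
          have ht0 : t ≠ 0 := fun h' => h0' (h' ▸ ht)
          exact mul_ne_zero two_ne_zero (pow_ne_zero 2 ht0)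
        · exact hc.intervalIntegrable _ _
        · intro t ht
          have hxt : x^2 ≤ t^2 := by
            have := ht.1
            nlinarith [abs_nonneg x, sq_abs x]
          have h2 : 0 < x^2 + t^2 := by positivity
          apply inv_anti₀ h2
          nlinarith
      rw [aux_int_two_sq x hx0] at hle
      linarith
    linarith

lemma aux_im (u E t : ℝ) :
    (((u : ℂ) - (E + t * Complex.I))⁻¹).im = t / ((u - E)^2 + t^2) := by
  rw [Complex.inv_im]
  simp [Complex.normSq_apply]
  ring_nf

/-- If the symmetrized Stieltjes transform
`m(z) = (1/(2N)) ∑_{1 ≤ |i| ≤ N} (y_i - z)⁻¹` (with `y_{-i} = -y_i`) satisfies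
`|m(E + it)| ≤ C_a` for all `t ∈ [η, 1]` with `η = N^{-1+a}`, then
`(1/(2N)) ∑_{|y_i - E| ≥ η} |y_i - E|⁻¹ ≤ 2 C_a log N + 4`. -/
theorem empirical_sum_inv_bound (N : ℕ) (hN : 2 ≤ N) (y : Fin N → ℝ)
    (a : ℝ) (ha : 0 < a) (ha1 : a < 1) (Ca : ℝ) (hCa : 0 < Ca) (E : ℝ)
    (η : ℝ) (hη : η = (N : ℝ) ^ (-1 + a : ℝ))
    (ysym : Fin N ⊕ Fin N → ℝ) (hysym : ysym = Sum.elim y (fun i => -y i))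
    (hm : ∀ t : ℝ, η ≤ t → t ≤ 1 →
      ‖((1 / (2 * (N : ℂ))) *
        ∑ j : Fin N ⊕ Fin N, ((ysym j : ℂ) - (E + t * Complex.I))⁻¹)‖ ≤ Ca) :
    (1 / (2 * (N : ℝ))) *
        ∑ j : Fin N ⊕ Fin N, (if η ≤ |ysym j - E| then 1 / |ysym j - E| else 0)
      ≤ 2 * Ca * Real.log N + 4 := by
  have hN2 : (2:ℝ) ≤ (N:ℝ) := by exact_mod_cast hN
  have hN0 : (0:ℝ) < N := by linarith
  have hη0 : 0 < η := hη ▸ Real.rpow_pos_of_pos hN0 _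
  have hη1 : η ≤ 1 := by
    rw [hη]
    exact Real.rpow_le_one_of_one_le_of_nonpos (by linarith) (by linarith)
  set x : Fin N ⊕ Fin N → ℝ := fun j => ysym j - E with hxdef
  set g : (Fin N ⊕ Fin N) → ℝ → ℝ :=
    fun j t => if η ≤ |x j| then ((x j)^2 + t^2)⁻¹ else 0 with hgdef
  -- imaginary part bound
  have him : ∀ t : ℝ, η ≤ t → t ≤ 1 →
      (1/(2*(N:ℝ))) * ∑ j : Fin N ⊕ Fin N, t / ((x j)^2 + t^2) ≤ Ca := by
    intro t ht1 ht2
    have h := hm t ht1 ht2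
    have heq : ((1 / (2 * (N : ℂ))) *
        ∑ j : Fin N ⊕ Fin N, ((ysym j : ℂ) - (E + t * Complex.I))⁻¹).im
        = (1/(2*(N:ℝ))) * ∑ j : Fin N ⊕ Fin N, t / ((x j)^2 + t^2) := by
      rw [show (1 / (2 * (N:ℂ))) = ((1/(2*(N:ℝ)) : ℝ) : ℂ) by push_cast; ring]
      rw [Complex.mul_im]
      simp only [Complex.ofReal_im, Complex.ofReal_re, zero_mul, add_zero, Complex.im_sum]
      congr 1
      apply Finset.sum_congr rfl
      intro j _
      exact aux_im (ysym j) E t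
    calc (1/(2*(N:ℝ))) * ∑ j : Fin N ⊕ Fin N, t / ((x j)^2 + t^2)
        ≤ |((1 / (2 * (N : ℂ))) *
            ∑ j : Fin N ⊕ Fin N, ((ysym j : ℂ) - (E + t * Complex.I))⁻¹).im| := by
          rw [heq]; exact le_abs_self _
      _ ≤ ‖((1 / (2 * (N : ℂ))) *
            ∑ j : Fin N ⊕ Fin N, ((ysym j : ℂ) - (E + t * Complex.I))⁻¹)‖ :=
          Complex.abs_im_le_norm _
      _ ≤ Ca := h
  -- pointwise-in-t bound for the sum of g
  have hpt : ∀ t ∈ Set.Icc η 1,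
      (1/(2*(N:ℝ))) * ∑ j : Fin N ⊕ Fin N, g j t ≤ Ca * t⁻¹ := by
    intro t ht
    have ht0 : 0 < t := lt_of_lt_of_le hη0 ht.1
    have h1 : ∑ j : Fin N ⊕ Fin N, g j t
        ≤ ∑ j : Fin N ⊕ Fin N, t⁻¹ * (t / ((x j)^2 + t^2)) := by
      apply Finset.sum_le_sum
      intro j _
      by_cases hj : η ≤ |x j|
      · simp only [hgdef, if_pos hj]
        rw [mul_div_assoc', inv_mul_cancel₀ (ne_of_gt ht0), one_div]
      · simp only [hgdef, if_neg hj]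
        positivity
    have h2 : (1/(2*(N:ℝ))) * ∑ j : Fin N ⊕ Fin N, t⁻¹ * (t / ((x j)^2 + t^2))
        = t⁻¹ * ((1/(2*(N:ℝ))) * ∑ j : Fin N ⊕ Fin N, t / ((x j)^2 + t^2)) := by
      rw [← Finset.mul_sum]; ring
    have h3 := him t ht.1 ht.2
    have hhalf : (0:ℝ) ≤ 1/(2*(N:ℝ)) := by positivity
    calc (1/(2*(N:ℝ))) * ∑ j : Fin N ⊕ Fin N, g j t
        ≤ (1/(2*(N:ℝ))) * ∑ j : Fin N ⊕ Fin N, t⁻¹ * (t / ((x j)^2 + t^2)) := by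
          exact mul_le_mul_of_nonneg_left h1 hhalf
      _ = t⁻¹ * ((1/(2*(N:ℝ))) * ∑ j : Fin N ⊕ Fin N, t / ((x j)^2 + t^2)) := h2
      _ ≤ t⁻¹ * Ca := mul_le_mul_of_nonneg_left h3 (by positivity)
      _ = Ca * t⁻¹ := mul_comm _ _
  -- continuity/integrability of g j
  have hgc : ∀ j : Fin N ⊕ Fin N, Continuous (g j) := by
    intro j
    by_cases hj : η ≤ |x j|
    · have hne : x j ≠ 0 := abs_pos.mp (lt_of_lt_of_le hη0 hj)
      have : g j = fun t => ((x j)^2 + t^2)⁻¹ := by funext t; simp [hgdef, hj]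
      rw [this]
      apply Continuous.inv₀ (by continuity)
      intro t; positivity
    · have : g j = fun _ => 0 := by funext t; simp [hgdef, hj]
      rw [this]; exact continuous_const
  have hgint : ∀ j : Fin N ⊕ Fin N, IntervalIntegrable (g j) volume η 1 :=
    fun j => (hgc j).intervalIntegrable _ _
  -- swap sum and integral
  have hswap : ∑ j : Fin N ⊕ Fin N, ∫ t in η..1, g j t
      = ∫ t in η..1, ∑ j : Fin N ⊕ Fin N, g j t :=
    (intervalIntegral.integral_finset_sum (fun j _ => hgint j)).symm
  -- integrability of combined functions
  have hFc : Continuous fun t => (1/(2*(N:ℝ))) * ∑ j : Fin N ⊕ Fin N, g j t :=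
    continuous_const.mul (continuous_finset_sum _ (fun j _ => hgc j))
  have hFint : IntervalIntegrable
      (fun t => (1/(2*(N:ℝ))) * ∑ j : Fin N ⊕ Fin N, g j t) volume η 1 :=
    hFc.intervalIntegrable _ _
  have h0uIcc : (0:ℝ) ∉ Set.uIcc η 1 := Set.notMem_uIcc_of_lt hη0 one_pos
  have hCat : IntervalIntegrable (fun t : ℝ => Ca * t⁻¹) volume η 1 := by
    apply ContinuousOn.intervalIntegrable
    apply ContinuousOn.mul continuousOn_const
    apply ContinuousOn.inv₀ continuousOn_id
    intro t ht
    exact fun h' => h0uIcc (h' ▸ ht)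
  have hmono : ∫ t in η..1, (1/(2*(N:ℝ))) * ∑ j : Fin N ⊕ Fin N, g j t
      ≤ ∫ t in η..1, Ca * t⁻¹ :=
    intervalIntegral.integral_mono_on hη1 hFint hCat hpt
  have hval : ∫ t in η..1, Ca * t⁻¹ = Ca * ((1-a) * Real.log N) := by
    rw [intervalIntegral.integral_const_mul, integral_inv h0uIcc]
    rw [Real.log_div one_ne_zero (ne_of_gt hη0), Real.log_one, hη,
      Real.log_rpow hN0]
    ring
  -- per-term bound
  have hterm : ∀ j : Fin N ⊕ Fin N,
      (if η ≤ |ysym j - E| then 1 / |ysym j - E| else 0)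
        ≤ 2 * (∫ t in η..1, g j t) + 1 := by
    intro j
    by_cases hj : η ≤ |x j|
    · have hgj : g j = fun t => ((x j)^2 + t^2)⁻¹ := by funext t; simp [hgdef, hj]
      rw [if_pos hj, hgj]
      exact aux_ptwise (x j) η hη0 hη1 hj
    · have hgj : g j = fun _ => 0 := by funext t; simp [hgdef, hj]
      rw [if_neg hj, hgj]
      simp
  -- put everything together
  have hcard : ∑ j : Fin N ⊕ Fin N, (1:ℝ) = 2 * N := by
    simp [Finset.card_univ]
    ring
  have hhalf : (0:ℝ) ≤ 1/(2*(N:ℝ)) := by positivity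
  have hlogN : 0 ≤ Real.log N := Real.log_nonneg (by linarith)
  have hmain : (1 / (2 * (N : ℝ))) *
        ∑ j : Fin N ⊕ Fin N, (if η ≤ |ysym j - E| then 1 / |ysym j - E| else 0)
      ≤ 2 * (Ca * ((1-a) * Real.log N)) + 1 := by
    calc (1 / (2 * (N : ℝ))) *
          ∑ j : Fin N ⊕ Fin N, (if η ≤ |ysym j - E| then 1 / |ysym j - E| else 0)
        ≤ (1 / (2 * (N : ℝ))) *
          ∑ j : Fin N ⊕ Fin N, (2 * (∫ t in η..1, g j t) + 1) :=
          mul_le_mul_of_nonneg_left (Finset.sum_le_sum (fun j _ => hterm j)) hhalf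
      _ = 2 * ((1 / (2 * (N : ℝ))) * ∑ j : Fin N ⊕ Fin N, ∫ t in η..1, g j t)
            + (1 / (2 * (N : ℝ))) * (2 * N) := by
          rw [Finset.sum_add_distrib, ← Finset.mul_sum, hcard]
          ring
      _ = 2 * (∫ t in η..1, (1/(2*(N:ℝ))) * ∑ j : Fin N ⊕ Fin N, g j t) + 1 := by
          rw [hswap, ← intervalIntegral.integral_const_mul]
          congr 1
          field_simp
      _ ≤ 2 * (Ca * ((1-a) * Real.log N)) + 1 := by
          have := hval ▸ hmono
          linarith
  nlinarith [mul_nonneg (mul_nonneg hCa.le hlogN) ha.le]
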